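/- arXiv:1708.00393 — 2 statements merged into one kernel-verified Lean document; each statement's English description precedes it below -/
import Mathlib

section
/- Let ζ ∈ ℂ be a primitive m-th root of unity and let m₁,…,m_n be natural numbers such that (ζ; m₁,…,m_n) is generic. Let I be a nonempty subset of {1,…,n} and let N be a positive integer with N ≡ −1 (mod m). Then ∑_{k=1}^{N} ∏_{s∈I} (ζ^{k m_s} + ζ^{−k m_s}) = −2^{|I|}. -/
/-- `(ζ; m₁, …, m_n)` is generic: for all disjoint subsets `J`, `L` of indices, not both
empty, `∏_{j∈J} ζ^{m_j} ≠ ∏_{l∈L} ζ^{m_l}`, and `ζ^{2 m_i} ≠ 1` for every `i`. -/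
def Generic (ζ : ℂ) {n : ℕ} (m : Fin n → ℕ) : Prop :=
  (∀ J L : Finset (Fin n), Disjoint J L → (J.Nonempty ∨ L.Nonempty) →
    ∏ j ∈ J, ζ ^ m j ≠ ∏ l ∈ L, ζ ^ m l) ∧
  ∀ i, ζ ^ (2 * m i) ≠ 1

lemma aux_geom {w : ℂ} (hw : w ≠ 1) {N : ℕ} (h : w ^ (N + 1) = 1) :
    ∑ k ∈ Finset.Icc 1 N, w ^ k = -1 := by
  have h0 : ∑ k ∈ Finset.range (N + 1), w ^ k = 0 := by
    rw [geom_sum_eq hw, h]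
    simp
  have hre : Finset.range (N + 1) = insert 0 (Finset.Icc 1 N) := by
    ext k
    simp only [Finset.mem_range, Finset.mem_insert, Finset.mem_Icc]
    omega
  rw [hre, Finset.sum_insert (by simp)] at h0
  simp only [pow_zero] at h0
  linear_combination h0

theorem statement9 {m : ℕ} {ζ : ℂ} (hζ : IsPrimitiveRoot ζ m)
    {n : ℕ} (mm : Fin n → ℕ) (hgen : Generic ζ mm)
    (I : Finset (Fin n)) (hI : I.Nonempty)
    (N : ℕ) (hN : 0 < N) (hNm : (N : ZMod m) = -1) :
    ∑ k ∈ Finset.Icc 1 N, ∏ s ∈ I, (ζ ^ (k * mm s) + ζ⁻¹ ^ (k * mm s)) =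
      -(2 ^ I.card : ℂ) := by
  have hm : 0 < m := by
    rcases Nat.eq_zero_or_pos m with h | h
    · subst h
      have : (N : ℤ) = -1 := hNm
      omega
    · exact h
  have hζm : ζ ^ m = 1 := hζ.pow_eq_one
  have hζ0 : ζ ≠ 0 := hζ.ne_zero hm.ne'
  have hdvd : m ∣ N + 1 := by
    have h1 : ((N + 1 : ℕ) : ZMod m) = 0 := by push_cast [hNm]; ring
    exact (ZMod.natCast_eq_zero_iff _ _).mp h1
  obtain ⟨c, hc⟩ := hdvd
  set w : Finset (Fin n) → ℂ :=
    fun S => (∏ s ∈ S, ζ ^ mm s) * ∏ s ∈ I \ S, (ζ ^ mm s)⁻¹ with hwdef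
  have hw1 : ∀ S ∈ I.powerset, w S ≠ 1 := by
    intro S hS hone
    have hSsub := Finset.mem_powerset.mp hS
    have hdis : Disjoint S (I \ S) := Finset.disjoint_sdiff
    have hne : S.Nonempty ∨ (I \ S).Nonempty := by
      by_contra hcon
      push_neg at hcon
      obtain ⟨h1, h2⟩ := hcon
      have : I = ∅ := by
        rw [← Finset.union_sdiff_of_subset hSsub, h2, Finset.union_empty, h1]
      exact Finset.not_nonempty_empty (this ▸ hI)
    apply hgen.1 S (I \ S) hdis hne
    have hC : (∏ s ∈ I \ S, ζ ^ mm s) ≠ 0 :=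
      Finset.prod_ne_zero_iff.mpr fun s _ => pow_ne_zero _ hζ0
    rw [hwdef] at hone
    simp only at hone
    rw [Finset.prod_inv_distrib] at hone
    exact (mul_inv_eq_one₀ hC).mp hone
  have hwN : ∀ S, w S ^ (N + 1) = 1 := by
    intro S
    have hbase : w S ^ m = 1 := by
      rw [hwdef]
      simp only
      rw [mul_pow, ← Finset.prod_pow, ← Finset.prod_pow]
      have e1 : ∀ s ∈ S, (ζ ^ mm s) ^ m = 1 := by
        intro s _
        rw [← pow_mul, mul_comm, pow_mul, hζm, one_pow]
      have e2 : ∀ s ∈ I \ S, ((ζ ^ mm s)⁻¹) ^ m = 1 := by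
        intro s _
        rw [inv_pow, ← pow_mul, mul_comm, pow_mul, hζm, one_pow, inv_one]
      rw [Finset.prod_congr rfl e1, Finset.prod_congr rfl e2]
      simp
    rw [hc, pow_mul, hbase, one_pow]
  have step1 : ∀ k, ∏ s ∈ I, (ζ ^ (k * mm s) + ζ⁻¹ ^ (k * mm s)) =
      ∑ S ∈ I.powerset, w S ^ k := by
    intro k
    have e : ∀ s ∈ I, ζ ^ (k * mm s) + ζ⁻¹ ^ (k * mm s) =
        (ζ ^ mm s) ^ k + ((ζ ^ mm s)⁻¹) ^ k := by
      intro s _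
      rw [mul_comm k (mm s), pow_mul, pow_mul, inv_pow]
    rw [Finset.prod_congr rfl e, Finset.prod_add]
    refine Finset.sum_congr rfl fun S hS => ?_
    rw [hwdef]
    simp only
    rw [mul_pow, Finset.prod_pow, Finset.prod_pow]
  rw [Finset.sum_congr rfl fun k _ => step1 k, Finset.sum_comm]
  have : ∀ S ∈ I.powerset, ∑ k ∈ Finset.Icc 1 N, w S ^ k = -1 :=
    fun S hS => aux_geom (hw1 S hS) (hwN S)
  rw [Finset.sum_congr rfl this, Finset.sum_const, Finset.card_powerset]
  simp
end

section
/- Let ζ ∈ ℂ be a primitive m-th root of unity and let m₁,…,m_n be natural numbers such that (ζ; m₁,…,m_n) is generic. Let {I₁,…,I_l} be a partition of {1,…,n} into l nonempty pairwise disjoint blocks, and let N be a positive integer with N ≡ −1 (mod m). Then the sum over all l-tuples (k₁,…,k_l) of pairwise distinct elements of {1,…,N} of the products ∏_{j=1}^{l} ∏_{s∈I_j} (ζ^{k_j m_s} + ζ^{−k_j m_s}) equals (−1)^l · l! · 2^n. -/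
lemma sum_Icc_pow (x : ℂ) (N : ℕ) (hx1 : x ≠ 1) (hxN : x ^ (N + 1) = 1) :
    ∑ k ∈ Finset.Icc 1 N, x ^ k = -1 := by
  have hr : Finset.range (N + 1) = insert 0 (Finset.Icc 1 N) := by
    ext a; simp [Finset.mem_range, Finset.mem_Icc]; omega
  have hg : ∑ k ∈ Finset.range (N + 1), x ^ k = 0 := by
    rw [geom_sum_eq hx1, hxN]; simp
  rw [hr, Finset.sum_insert (by simp)] at hg
  simpa using by linear_combination hg

lemma block_sum {m n : ℕ} {ζ : ℂ} (hζ : IsPrimitiveRoot ζ m) (mm : Fin n → ℕ)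
    (hgen : Generic ζ mm) (N : ℕ) (hdvd : m ∣ N + 1) (hm : 0 < m)
    (A : Finset (Fin n)) (hA : A.Nonempty) :
    ∑ k ∈ Finset.Icc 1 N, ∏ s ∈ A, (ζ ^ (k * mm s) + ζ⁻¹ ^ (k * mm s)) = -(2 ^ A.card) := by
  have hζ1 : ζ ^ m = 1 := hζ.pow_eq_one
  have hζ0 : ζ ≠ 0 := hζ.ne_zero hm.ne'
  have key : ∀ k, ∏ s ∈ A, (ζ ^ (k * mm s) + ζ⁻¹ ^ (k * mm s)) =
      ∑ J ∈ A.powerset, ((∏ s ∈ J, ζ ^ mm s) * ∏ s ∈ A \ J, ζ⁻¹ ^ mm s) ^ k := by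
    intro k
    have : ∀ s ∈ A, ζ ^ (k * mm s) + ζ⁻¹ ^ (k * mm s) =
        (ζ ^ mm s) ^ k + (ζ⁻¹ ^ mm s) ^ k := by
      intro s _; rw [← pow_mul', ← pow_mul']
    rw [Finset.prod_congr rfl this, Finset.prod_add]
    refine Finset.sum_congr rfl fun J _ => ?_
    rw [mul_pow, ← Finset.prod_pow, ← Finset.prod_pow]
  simp_rw [key]
  rw [Finset.sum_comm]
  have inner : ∀ J ∈ A.powerset,
      ∑ k ∈ Finset.Icc 1 N, ((∏ s ∈ J, ζ ^ mm s) * ∏ s ∈ A \ J, ζ⁻¹ ^ mm s) ^ k = -1 := by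
    intro J hJ
    rw [Finset.mem_powerset] at hJ
    set x : ℂ := (∏ s ∈ J, ζ ^ mm s) * ∏ s ∈ A \ J, ζ⁻¹ ^ mm s with hx
    have hinv : ∏ s ∈ A \ J, ζ⁻¹ ^ mm s = (∏ s ∈ A \ J, ζ ^ mm s)⁻¹ := by
      rw [← Finset.prod_inv_distrib]
      exact Finset.prod_congr rfl fun s _ => by rw [inv_pow]
    have hprod0 : (∏ s ∈ A \ J, ζ ^ mm s) ≠ 0 := Finset.prod_ne_zero_iff.2 fun s _ => pow_ne_zero _ hζ0
    have hx1 : x ≠ 1 := by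
      intro h
      apply hgen.1 J (A \ J) Finset.disjoint_sdiff
      · rcases J.eq_empty_or_nonempty with h' | h'
        · right
          rw [h', Finset.sdiff_empty]
          exact hA
        · left; exact h'
      · rw [hx, hinv] at h
        field_simp at h
        exact h
    have hxm : x ^ m = 1 := by
      rw [hx, mul_pow, ← Finset.prod_pow, ← Finset.prod_pow]
      have h1 : ∀ s ∈ J, (ζ ^ mm s) ^ m = 1 := by
        intro s _; rw [← pow_mul, mul_comm, pow_mul, hζ1, one_pow]
      have h2 : ∀ s ∈ A \ J, (ζ⁻¹ ^ mm s) ^ m = 1 := by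
        intro s _
        rw [inv_pow, inv_pow, ← pow_mul, mul_comm, pow_mul, hζ1, one_pow, inv_one]
      rw [Finset.prod_congr rfl h1, Finset.prod_congr rfl h2]
      simp
    have hxN : x ^ (N + 1) = 1 := by
      obtain ⟨c, hc⟩ := hdvd
      rw [hc, pow_mul, hxm, one_pow]
    exact sum_Icc_pow x N hx1 hxN
  rw [Finset.sum_congr rfl inner]
  simp [Finset.card_powerset]

lemma sum_piFinset_succ {l : ℕ} (S : Finset ℕ) (g : (Fin (l + 1) → ℕ) → ℂ) :
    ∑ k ∈ Fintype.piFinset (fun _ : Fin (l + 1) => S), g k =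
      ∑ x ∈ S, ∑ k ∈ Fintype.piFinset (fun _ : Fin l => S), g (Fin.cons x k) := by
  rw [← Finset.sum_product']
  apply Finset.sum_nbij' (fun f => (f 0, Fin.tail f)) (fun p => Fin.cons p.1 p.2)
  · intro f hf
    simp only [Fintype.mem_piFinset] at hf
    simp [Finset.mem_product, Fintype.mem_piFinset, Fin.tail, hf]
  · rintro ⟨x, k⟩ hp
    simp only [Finset.mem_product, Fintype.mem_piFinset] at hp
    simp only [Fintype.mem_piFinset]
    intro i
    refine Fin.cases ?_ ?_ i <;> simp [hp.1, hp.2]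
  · intro f hf; exact Fin.cons_self_tail f
  · rintro ⟨x, k⟩ hp; simp
  · intro f hf; rw [Fin.cons_self_tail]

lemma key_abstract {n : ℕ} (S : Finset ℕ) (F : Finset (Fin n) → ℕ → ℂ)
    (hmul : ∀ A B, Disjoint A B → ∀ x, F (A ∪ B) x = F A x * F B x)
    (hsum : ∀ A : Finset (Fin n), A.Nonempty → ∑ x ∈ S, F A x = -(2 ^ A.card)) :
    ∀ l (I : Fin l → Finset (Fin n)), (∀ j, (I j).Nonempty) →
      (∀ i j, i ≠ j → Disjoint (I i) (I j)) →
      ∑ k ∈ (Fintype.piFinset fun _ : Fin l => S).filter (fun k => Function.Injective k),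
        ∏ j, F (I j) (k j) = (-1 : ℂ) ^ l * l.factorial * 2 ^ (∑ j, (I j).card) := by
  intro l
  induction l with
  | zero =>
    intro I hne hdisj
    have hfil : (Fintype.piFinset fun _ : Fin 0 => S).filter (fun k => Function.Injective k)
        = Fintype.piFinset fun _ : Fin 0 => S := by
      apply Finset.filter_true_of_mem
      intro f _ a
      exact a.elim0
    rw [hfil, Fintype.piFinset_of_isEmpty]
    simp
  | succ l ih =>
    intro I hne hdisj
    set a0 := (I 0).card with ha0
    set P : (Fin l → ℕ) → ℂ := fun k => ∏ j, F (I j.succ) (k j) with hP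
    rw [Finset.sum_filter, sum_piFinset_succ, Finset.sum_comm]
    have hterm : ∀ k ∈ Fintype.piFinset (fun _ : Fin l => S),
        (∑ x ∈ S, if Function.Injective (Fin.cons x k : Fin (l+1) → ℕ) then
            ∏ j, F (I j) ((Fin.cons x k : Fin (l+1) → ℕ) j) else 0)
        = if Function.Injective k then
            (-(2 ^ a0 : ℂ) - ∑ j, F (I 0) (k j)) * P k else 0 := by
      intro k hk
      by_cases hinj : Function.Injective k
      · rw [if_pos hinj]
        have himle : Finset.image k Finset.univ ⊆ S := by
          intro x hx
          obtain ⟨j, -, rfl⟩ := Finset.mem_image.1 hx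
          exact Fintype.mem_piFinset.1 hk j
        have hx_eq : ∀ x ∈ S,
            (if Function.Injective (Fin.cons x k : Fin (l+1) → ℕ) then ∏ j, F (I j) ((Fin.cons x k : Fin (l+1) → ℕ) j) else 0)
            = if x ∈ Finset.image k Finset.univ then 0 else F (I 0) x * P k := by
          intro x hx
          have hprod : ∏ j, F (I j) ((Fin.cons x k : Fin (l+1) → ℕ) j) = F (I 0) x * P k := by
            rw [Fin.prod_univ_succ]
            simp [P]
          by_cases hxr : x ∈ Finset.image k Finset.univ
          · rw [if_pos hxr, if_neg]
            rw [Fin.cons_injective_iff]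
            rintro ⟨hnr, -⟩
            obtain ⟨j, -, rfl⟩ := Finset.mem_image.1 hxr
            exact hnr ⟨j, rfl⟩
          · rw [if_neg hxr, if_pos, hprod]
            rw [Fin.cons_injective_iff]
            refine ⟨?_, hinj⟩
            rintro ⟨j, rfl⟩
            exact hxr (Finset.mem_image.2 ⟨j, Finset.mem_univ j, rfl⟩)
        rw [Finset.sum_congr rfl hx_eq]
        have : ∑ x ∈ S, (if x ∈ Finset.image k Finset.univ then 0 else F (I 0) x * P k)
            = ∑ x ∈ S \ Finset.image k Finset.univ, F (I 0) x * P k := by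
          rw [Finset.sdiff_eq_filter, Finset.sum_filter]
          exact Finset.sum_congr rfl fun x _ => by rw [ite_not]
        rw [this, Finset.sum_sdiff_eq_sub himle,
            Finset.sum_image (fun i _ j _ h => hinj h), ← Finset.sum_mul, ← Finset.sum_mul,
            hsum (I 0) (hne 0), ← sub_mul]
      · rw [if_neg hinj]
        apply Finset.sum_eq_zero
        intro x hx
        rw [if_neg]
        rw [Fin.cons_injective_iff]
        rintro ⟨-, h⟩
        exact hinj h
    rw [Finset.sum_congr rfl hterm, ← Finset.sum_filter]
    set T := (Fintype.piFinset fun _ : Fin l => S).filter (fun k => Function.Injective k) with hT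
    have split : ∑ k ∈ T, (-(2 ^ a0 : ℂ) - ∑ j, F (I 0) (k j)) * P k
        = -(2 ^ a0 : ℂ) * ∑ k ∈ T, P k - ∑ j : Fin l, ∑ k ∈ T, F (I 0) (k j) * P k := by
      rw [Finset.sum_congr rfl (fun k _ => by rw [sub_mul]), Finset.sum_sub_distrib]
      congr 1
      · rw [Finset.mul_sum]
      · simp_rw [Finset.sum_mul]
        rw [Finset.sum_comm]
    have h1 : ∑ k ∈ T, P k
        = (-1 : ℂ) ^ l * l.factorial * 2 ^ (∑ i : Fin l, (I i.succ).card) :=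
      ih (fun i => I i.succ) (fun i => hne _)
        (fun i i' h => hdisj _ _ fun h' => h (Fin.succ_injective _ h'))
    have h2 : ∀ j : Fin l, ∑ k ∈ T, F (I 0) (k j) * P k
        = (-1 : ℂ) ^ l * l.factorial * 2 ^ (a0 + ∑ i : Fin l, (I i.succ).card) := by
      intro j
      set J := Function.update (fun i : Fin l => I i.succ) j (I 0 ∪ I j.succ) with hJ
      have hJne : ∀ i, (J i).Nonempty := by
        intro i
        rcases eq_or_ne i j with rfl | h
        · rw [hJ, Function.update_self]
          exact (hne 0).inl
        · rw [hJ, Function.update_of_ne h]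
          exact hne _
      have hJdisj : ∀ i i', i ≠ i' → Disjoint (J i) (J i') := by
        intro i i' hii
        rcases eq_or_ne i j with rfl | hi
        · rw [hJ, Function.update_self, Function.update_of_ne (Ne.symm hii),
              Finset.disjoint_union_left]
          exact ⟨hdisj 0 i'.succ (Ne.symm (Fin.succ_ne_zero i')),
            hdisj _ _ fun h => hii (Fin.succ_injective _ h)⟩
        · rw [hJ, Function.update_of_ne hi]
          rcases eq_or_ne i' j with rfl | hi'
          · rw [Function.update_self, Finset.disjoint_union_right]
            exact ⟨hdisj i.succ 0 (Fin.succ_ne_zero i),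
              hdisj _ _ fun h => hii (Fin.succ_injective _ h)⟩
          · rw [Function.update_of_ne hi']
            exact hdisj _ _ fun h => hii (Fin.succ_injective _ h)
      have hcard : ∑ i : Fin l, (J i).card = a0 + ∑ i : Fin l, (I i.succ).card := by
        rw [hJ]
        rw [show ∑ i, (Function.update (fun i : Fin l => I i.succ) j (I 0 ∪ I j.succ) i).card
              = ∑ i, ((Function.update (fun i : Fin l => (I i.succ).card) j
                ((I 0 ∪ I j.succ).card)) i) from Finset.sum_congr rfl fun i _ => by
                  rcases eq_or_ne i j with rfl | h
                  · rw [Function.update_self, Function.update_self]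
                  · rw [Function.update_of_ne h, Function.update_of_ne h]]
        rw [Finset.sum_update_of_mem (Finset.mem_univ j),
            Finset.card_union_of_disjoint (hdisj 0 j.succ (Ne.symm (Fin.succ_ne_zero j)))]
        rw [Finset.sdiff_singleton_eq_erase, add_assoc,
            Finset.add_sum_erase _ (fun i : Fin l => (I i.succ).card) (Finset.mem_univ j)]
      have hprod : ∀ k : Fin l → ℕ, F (I 0) (k j) * P k = ∏ i, F (J i) (k i) := by
        intro k
        simp only [hP]
        rw [← Finset.mul_prod_erase Finset.univ (fun i => F (J i) (k i)) (Finset.mem_univ j),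
            ← Finset.mul_prod_erase Finset.univ (fun i => F (I i.succ) (k i)) (Finset.mem_univ j)]
        have heq : ∏ i ∈ Finset.univ.erase j, F (J i) (k i)
            = ∏ i ∈ Finset.univ.erase j, F (I i.succ) (k i) :=
          Finset.prod_congr rfl fun i hi => by
            rw [hJ, Function.update_of_ne (Finset.ne_of_mem_erase hi)]
        rw [heq, hJ, Function.update_self,
            hmul _ _ (hdisj 0 j.succ (Ne.symm (Fin.succ_ne_zero j)))]
        ring
      rw [Finset.sum_congr rfl (fun k _ => hprod k), ih J hJne hJdisj, hcard]
    rw [split, h1, Finset.sum_congr rfl (fun j _ => h2 j), Finset.sum_const,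
        Finset.card_univ, Fintype.card_fin, Fin.sum_univ_succ, ← ha0]
    push_cast [Nat.factorial_succ, pow_add, pow_succ]
    ring

theorem statement10 {m : ℕ} {ζ : ℂ} (hζ : IsPrimitiveRoot ζ m)
    {n : ℕ} (mm : Fin n → ℕ) (hgen : Generic ζ mm)
    {l : ℕ} (I : Fin l → Finset (Fin n))
    (hne : ∀ j, (I j).Nonempty)
    (hdisj : ∀ i j, i ≠ j → Disjoint (I i) (I j))
    (hcover : ∀ s : Fin n, ∃ j, s ∈ I j)
    (N : ℕ) (hN : 0 < N) (hNm : (N : ZMod m) = -1) :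
    ∑ k ∈ (Fintype.piFinset fun _ : Fin l => Finset.Icc 1 N).filter
        (fun k => Function.Injective k),
      ∏ j : Fin l, ∏ s ∈ I j, (ζ ^ (k j * mm s) + ζ⁻¹ ^ (k j * mm s)) =
      (-1 : ℂ) ^ l * (l.factorial : ℂ) * 2 ^ n := by
  have hdvd : m ∣ N + 1 := by
    rw [← ZMod.natCast_eq_zero_iff]
    push_cast
    rw [hNm]
    ring
  have hm : 0 < m := by
    rcases Nat.eq_zero_or_pos m with rfl | h
    · obtain ⟨c, hc⟩ := hdvd
      omega
    · exact h
  have hcardn : ∑ j, (I j).card = n := by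
    rw [← Finset.card_biUnion (fun i _ j _ h => hdisj i j h)]
    have huniv : Finset.univ.biUnion I = Finset.univ := by
      ext s
      simpa using hcover s
    rw [huniv, Finset.card_univ, Fintype.card_fin]
  have := key_abstract (Finset.Icc 1 N)
    (fun A k => ∏ s ∈ A, (ζ ^ (k * mm s) + ζ⁻¹ ^ (k * mm s)))
    (fun A B hAB x => Finset.prod_union hAB)
    (fun A hA => block_sum hζ mm hgen N hdvd hm A hA)
    l I hne hdisj
  rw [this, hcardn]
end
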